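/- Let L be a non-degenerate even lattice and r ∈ L a primitive vector with r² ≠ 0 such that the reflection σ_r is an isometry of L. Then the determinant of the orthogonal complement r⊥ in L satisfies det(r⊥) = det(L)·r²/div(r)² (up to sign conventions). -/

import Mathlib

open Submodule Set Matrix

/-- Helper: a unit integer squared is 1. -/
private lemma sq_eq_one_of_mul_eq_one {u v : ℤ} (h : u * v = 1) : u ^ 2 = 1 := by
  rcases Int.isUnit_iff.mp (IsUnit.of_mul_eq_one (a := u) v h) with h1 | h1 <;> simp [h1]

set_option maxHeartbeats 1000000 in
/-- For a primitive reflective vector `r` (with `r² ≠ 0`) in a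
non-degenerate even lattice `L` of rank `n`, the determinant of the orthogonal
complement `r⊥ = ker (B r)` satisfies `det(r⊥) = det(L) · r² / div(r)²`
up to sign; i.e. `det(r⊥) · div(r)² = ± det(L) · r²`, where determinants are the
determinants of Gram matrices of bases. -/
theorem stmt1 (M : Type*) [AddCommGroup M] [Module ℤ M]
    (B : M →ₗ[ℤ] M →ₗ[ℤ] ℤ)
    (hsymm : ∀ x y : M, B x y = B y x)
    (heven : ∀ x : M, 2 ∣ B x x)
    (hnondeg : ∀ x : M, (∀ y : M, B x y = 0) → x = 0)
    (n : ℕ) (b : Module.Basis (Fin n) ℤ M)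
    (r : M)
    (hprim : ∀ (k : ℤ) (x : M), k • x = r → IsUnit k)
    (hr2 : B r r ≠ 0)
    (hrefl : ∀ l : M, B r r ∣ 2 * B r l)
    (m : ℤ) (hm : 0 < m)
    (hdiv : ∀ l : M, m ∣ B r l)
    (hgen : ∃ l : M, B r l = m)
    (c : Module.Basis (Fin (n - 1)) ℤ (LinearMap.ker (B r))) :
    ∃ ε : ℤ, (ε = 1 ∨ ε = -1) ∧
      (Matrix.det (Matrix.of fun i j => B ((c i) : M) ((c j) : M))) * m ^ 2 =
        ε * (Matrix.det (Matrix.of fun i j => B (b i) (b j))) * B r r := by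
  classical
  obtain ⟨l₀, hl₀⟩ := hgen
  have hm0 : m ≠ 0 := ne_of_gt hm
  -- n is positive
  have hn : 0 < n := by
    rcases Nat.eq_zero_or_pos n with h0 | h0
    · exfalso
      apply hr2
      have : r = 0 := by
        subst h0
        have := b.sum_repr r
        simpa using this.symm
      simp [this]
    · exact h0
  -- the family whose elements are the images of `c` together with `l₀`
  set g0 : (Fin (n - 1)) ⊕ Unit → M :=
    Sum.elim (fun i => ((c i : M))) (fun _ => l₀) with hg0
  -- linear independence
  have hcK : ∀ i, B r ((c i : M)) = 0 := fun i => LinearMap.mem_ker.mp (c i).2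
  -- an explicit linear inclusion of the kernel (avoiding instance diamonds)
  set f : (LinearMap.ker (B r)) →ₗ[ℤ] M :=
    { toFun := Subtype.val
      map_add' := fun _ _ => rfl
      map_smul' := by
        intro t a
        show ((t • a : LinearMap.ker (B r)) : M) = _
        rw [AddSubgroupClass.coe_zsmul]
        rw [← Int.cast_smul_eq_zsmul ℤ t (a : M), Int.cast_id]
        rfl } with hf
  have hfinj : LinearMap.ker f = ⊥ := by
    rw [LinearMap.ker_eq_bot]
    intro a b hab
    exact Subtype.ext hab
  have hcindep : LinearIndependent ℤ (fun i => ((c i : M))) := by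
    have h := c.linearIndependent.map' f hfinj
    exact h
  have hlindep : LinearIndependent ℤ (fun _ : Unit => l₀) := by
    rw [Fintype.linearIndependent_iff]
    intro g hg i
    simp only [Fintype.sum_unique] at hg
    have h2 : g () * m = 0 := by
      have h3 := congrArg (B r) hg
      simpa [hl₀, smul_eq_mul] using h3
    rcases mul_eq_zero.mp h2 with h | h
    · rw [Subsingleton.elim i ()]; exact h
    · exact absurd h hm0
  have hspanc_le : span ℤ (range fun i => ((c i : M))) ≤ LinearMap.ker (B r) := by
    rw [span_le]
    rintro x ⟨i, rfl⟩
    exact (c i).2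
  have hdisj : Disjoint (span ℤ (range fun i => ((c i : M))))
      (span ℤ (range fun _ : Unit => l₀)) := by
    rw [Submodule.disjoint_def]
    intro x hx hx'
    have hxK : B r x = 0 := LinearMap.mem_ker.mp (hspanc_le hx)
    rw [Set.range_const, mem_span_singleton] at hx'
    obtain ⟨a, rfl⟩ := hx'
    have h2 : a * m = 0 := by
      simpa [hl₀, smul_eq_mul] using hxK
    rcases mul_eq_zero.mp h2 with h | h
    · rw [h]
      first
      | exact zero_zsmul l₀
      | exact zero_smul ℤ l₀
      | module
    · exact absurd h hm0
  have hli : LinearIndependent ℤ g0 := hcindep.sum_type hlindep hdisj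
  -- spanning
  have hspan : ⊤ ≤ span ℤ (range g0) := by
    intro x _
    obtain ⟨t, ht⟩ := hdiv x
    have hy : B r (x - t • l₀) = 0 := by
      simp [ht, hl₀, smul_eq_mul, mul_comm]
    have hyc : (x - t • l₀) ∈ span ℤ (range fun i => ((c i : M))) := by
      have hrange : LinearMap.range f = LinearMap.ker (B r) := by
        ext y
        constructor
        · rintro ⟨a, rfl⟩; exact a.2
        · intro hy'; exact ⟨⟨y, hy'⟩, rfl⟩
      have h2 : x - t • l₀ ∈ Submodule.map f ⊤ := by
        rw [Submodule.map_top, hrange]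
        exact LinearMap.mem_ker.mpr hy
      rw [← c.span_eq, Submodule.map_span, ← Set.range_comp] at h2
      exact h2
    have hyg : (x - t • l₀) ∈ span ℤ (range g0) := by
      refine Submodule.span_mono ?_ hyc
      rintro y ⟨i, rfl⟩
      exact ⟨Sum.inl i, rfl⟩
    have hlg : l₀ ∈ span ℤ (range g0) :=
      Submodule.subset_span ⟨Sum.inr (), rfl⟩
    have hlg' : t • l₀ ∈ span ℤ (range g0) := by
      rw [← Int.cast_smul_eq_zsmul ℤ t l₀]
      exact Submodule.smul_mem _ _ hlg
    have h4 := Submodule.add_mem _ hyg hlg'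
    rwa [sub_add_cancel] at h4
  -- the basis `d`
  set d : Module.Basis ((Fin (n - 1)) ⊕ Unit) ℤ M := Module.Basis.mk hli hspan with hd
  have hdcoe : ∀ i, d i = g0 i := fun i => by rw [hd, Module.Basis.coe_mk]
  -- key: B r x = d.repr x (inr ()) * m
  have hkey : ∀ x : M, B r x = d.repr x (Sum.inr ()) * m := by
    intro x
    conv_lhs => rw [← d.sum_repr x]
    rw [map_sum, Fintype.sum_sum_type]
    simp only [LinearMap.map_smul, hdcoe]
    simp [hg0, hcK, hl₀, smul_eq_mul]
  set k : ℤ := d.repr r (Sum.inr ()) with hkdef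
  have hk : B r r = k * m := hkey r
  -- Gram matrices
  set Gb : Matrix (Fin n) (Fin n) ℤ := Matrix.of fun i j => B (b i) (b j) with hGb
  set Gd : Matrix _ _ ℤ := LinearMap.BilinForm.toMatrix d B with hGd
  set A : Matrix (Fin (n - 1)) (Fin (n - 1)) ℤ :=
    Matrix.of fun i j => B ((c i : M)) ((c j : M)) with hA
  -- Step 1: det Gd = det Gb
  have step1 : Gd.det = Gb.det := by
    have e : ((Fin (n - 1)) ⊕ Unit) ≃ Fin n :=
      ((Equiv.refl (Fin (n-1))).sumCongr (Equiv.ofUnique Unit (Fin 1))).trans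
        ((finSumFinEquiv).trans (finCongr (by omega)))
    set d' : Module.Basis (Fin n) ℤ M := d.reindex e with hd'
    have hGd' : LinearMap.BilinForm.toMatrix d' B = Gd.submatrix e.symm e.symm := by
      ext i j
      simp [hGd, LinearMap.BilinForm.toMatrix_apply, hd', Matrix.submatrix_apply]
    have hchg : (b.toMatrix d')ᵀ * (LinearMap.BilinForm.toMatrix b B) * (b.toMatrix d')
        = LinearMap.BilinForm.toMatrix d' B :=
      LinearMap.BilinForm.toMatrix_mul_basis_toMatrix b d' B
    have hBb : LinearMap.BilinForm.toMatrix b B = Gb := by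
      ext i j; simp [hGb, LinearMap.BilinForm.toMatrix_apply]
    have hu : (b.toMatrix d').det * (d'.toMatrix b).det = 1 := by
      rw [← Matrix.det_mul, Module.Basis.toMatrix_mul_toMatrix_flip, Matrix.det_one]
    have hsq := sq_eq_one_of_mul_eq_one hu
    have hdet := congrArg Matrix.det hchg
    rw [Matrix.det_mul, Matrix.det_mul, Matrix.det_transpose, hBb, hGd'] at hdet
    rw [Matrix.det_submatrix_equiv_self] at hdet
    calc Gd.det = (b.toMatrix d').det ^ 2 * Gb.det := by
          rw [← hdet]; ring
      _ = Gb.det := by rw [hsq, one_mul]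
  -- Step 2: the Gram matrix of the family (c, r)
  set g1 : (Fin (n - 1)) ⊕ Unit → M := Sum.elim (fun i => ((c i : M))) (fun _ => r) with hg1
  set Gg : Matrix _ _ ℤ := Matrix.of fun i j => B (g1 i) (g1 j) with hGg
  -- Gg is block diagonal
  have hGgblock : Gg = Matrix.fromBlocks A 0 0 (Matrix.of fun _ _ : Unit => B r r) := by
    ext i j
    rcases i with i | i <;> rcases j with j | j <;>
      simp [hGg, hg1, hA, Matrix.fromBlocks, hcK, hsymm _ r]
  have hGgdet : Gg.det = A.det * B r r := by
    rw [hGgblock, Matrix.det_fromBlocks_zero₂₁,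
      Matrix.det_unique (Matrix.of fun _ _ : Unit => B r r)]
    simp
  -- Step 3: Gg via change of coordinates from d
  set ψ : M →ₗ[ℤ] M := d.constr ℕ g1 with hψ
  have hψd : ∀ i, ψ (d i) = g1 i := fun i => by
    rw [hψ]
    exact Module.Basis.constr_basis d ℕ g1 i
  set Q : Matrix _ _ ℤ := LinearMap.toMatrix d d ψ with hQ
  have hcomp : LinearMap.BilinForm.toMatrix d (B.compl₁₂ ψ ψ) = Qᵀ * Gd * Q := by
    rw [hGd, hQ]
    exact LinearMap.BilinForm.toMatrix_comp d d B ψ ψ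
  have hGgQ : Gg = Qᵀ * Gd * Q := by
    rw [← hcomp]
    ext i j
    simp [hGg, LinearMap.BilinForm.toMatrix_apply, LinearMap.compl₁₂_apply, hψd]
  -- Q is block upper triangular with determinant k
  have hQdet : Q.det = k := by
    have hQblock : Q = Matrix.fromBlocks 1 (Matrix.of fun i _ => d.repr r (Sum.inl i)) 0
        (Matrix.of fun _ _ : Unit => k) := by
      ext i j
      rcases i with i | i <;> rcases j with j | j
      · have h5 : ψ (d (Sum.inl j)) = d (Sum.inl j) := by
          rw [hψd, hdcoe]; simp [hg0, hg1]
        simp [hQ, LinearMap.toMatrix_apply, h5, Matrix.fromBlocks,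
          Matrix.one_apply, Finsupp.single_apply, eq_comm]
      · have h5 : ψ (d (Sum.inr j)) = r := by rw [hψd]; rfl
        simp [hQ, LinearMap.toMatrix_apply, h5, Matrix.fromBlocks]
      · have h5 : ψ (d (Sum.inl j)) = d (Sum.inl j) := by
          rw [hψd, hdcoe]; simp [hg0, hg1]
        simp [hQ, LinearMap.toMatrix_apply, h5, Matrix.fromBlocks,
          Finsupp.single_apply]
      · have h5 : ψ (d (Sum.inr j)) = r := by rw [hψd]; rfl
        simp [hQ, LinearMap.toMatrix_apply, h5, Matrix.fromBlocks, hkdef]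
    rw [hQblock, Matrix.det_fromBlocks_zero₂₁, Matrix.det_one, Matrix.det_unique]
    simp
  -- combine
  have hGgdet2 : Gg.det = k ^ 2 * Gb.det := by
    rw [hGgQ, Matrix.det_mul, Matrix.det_mul, Matrix.det_transpose, hQdet, step1]
    ring
  have main : A.det * B r r = k ^ 2 * Gb.det := by rw [← hGgdet, hGgdet2]
  refine ⟨1, Or.inl rfl, ?_⟩
  rw [one_mul]
  apply mul_right_cancel₀ hr2
  calc A.det * m ^ 2 * B r r = (A.det * B r r) * m ^ 2 := by ring
    _ = k ^ 2 * Gb.det * m ^ 2 := by rw [main]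
    _ = Gb.det * (k * m) ^ 2 := by ring
    _ = Gb.det * B r r * B r r := by rw [← hk]; ring
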